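/- For every ρ ≥ 1, the sequence M* = ((n+1)^{ρn})_{n≥0} belongs to the class 𝓜, i.e. M* is increasing, M*_0 = 1, and M* satisfies conditions (i1), (i2), (i3), (i4). -/

import Mathlib

open Filter

/-- Condition (i1): logarithmic convexity. -/
def CondI1 (L : ℕ → ℝ) : Prop := ∀ n : ℕ, (L (n + 1)) ^ 2 ≤ L n * L (n + 2)

/-- Condition (i2). -/
def CondI2 (L : ℕ → ℝ) : Prop :=
  ∃ H₁ : ℝ, 0 < H₁ ∧ ∃ H₂ : ℝ, 0 < H₂ ∧ ∀ n : ℕ, H₁ * H₂ ^ n * n.factorial ≤ L n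

/-- Condition (i3). -/
def CondI3 (L : ℕ → ℝ) : Prop :=
  ∀ s : ℝ, 1 < s →
    1 < Filter.liminf (fun n : ℕ => (L ⌊s * (n : ℝ)⌋₊ / (L n) ^ s) ^ ((1 : ℝ) / n)) Filter.atTop

/-- Condition (i4). -/
def CondI4 (L : ℕ → ℝ) : Prop :=
  ∀ δ : ℝ, 0 < δ → ∃ p : ℝ, 0 < p ∧ ∃ t : ℝ, 1 < t ∧
    ∀ n m : ℕ, L (m + n) / (L m * (1 + δ) ^ m) ≤ p * t ^ n * L n

/-- The class 𝓜 of increasing sequences of positive reals with first term 1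
satisfying (i1)-(i4). -/
def ClassM (L : ℕ → ℝ) : Prop :=
  (∀ n, 0 < L n) ∧ Monotone L ∧ L 0 = 1 ∧ CondI1 L ∧ CondI2 L ∧ CondI3 L ∧ CondI4 L


private lemma stmt6_log_ub {x a : ℝ} (hx : 0 < x) (ha : 0 < a) :
    Real.log x ≤ a * x - 1 - Real.log a := by
  have h := Real.log_le_sub_one_of_pos (mul_pos ha hx)
  rw [Real.log_mul (ne_of_gt ha) (ne_of_gt hx)] at h
  linarith

private lemma stmt6_log_lb {x : ℝ} (hx : 0 < x) : 1 - 1/x ≤ Real.log x := by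
  have h := Real.log_le_sub_one_of_pos (show (0:ℝ) < x⁻¹ by positivity)
  rw [Real.log_inv] at h
  have : 1/x = x⁻¹ := one_div x
  linarith

private lemma stmt6_convexity (n : ℕ) :
    2 * (((n:ℝ)+1) * Real.log ((n:ℝ)+2)) ≤
      (n:ℝ) * Real.log ((n:ℝ)+1) + ((n:ℝ)+2) * Real.log ((n:ℝ)+3) := by
  set x := Real.log ((n:ℝ)+1) with hx
  set y := Real.log ((n:ℝ)+2) with hy
  set z := Real.log ((n:ℝ)+3) with hz
  have hn0 : (0:ℝ) ≤ n := Nat.cast_nonneg n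
  have e1 : y - x ≤ 1/((n:ℝ)+1) := by
    have h := Real.log_le_sub_one_of_pos (show (0:ℝ) < ((n:ℝ)+2)/((n:ℝ)+1) by positivity)
    rw [Real.log_div (by positivity) (by positivity)] at h
    have h2 : ((n:ℝ)+2)/((n:ℝ)+1) - 1 = 1/((n:ℝ)+1) := by field_simp; norm_num
    linarith
  have e2 : 1/((n:ℝ)+3) ≤ z - y := by
    have h := stmt6_log_lb (show (0:ℝ) < ((n:ℝ)+3)/((n:ℝ)+2) by positivity)
    rw [Real.log_div (by positivity) (by positivity)] at h
    have h2 : 1 - 1/(((n:ℝ)+3)/((n:ℝ)+2)) = 1/((n:ℝ)+3) := by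
      rw [one_div_div]; field_simp; norm_num
    linarith
  have q3 : (n:ℝ) * (y - x) ≤ (n:ℝ) * (1/((n:ℝ)+1)) := mul_le_mul_of_nonneg_left e1 hn0
  have q4 : ((n:ℝ)+2) * (1/((n:ℝ)+3)) ≤ ((n:ℝ)+2) * (z - y) :=
    mul_le_mul_of_nonneg_left e2 (by positivity)
  have q5 : (n:ℝ) * (1/((n:ℝ)+1)) ≤ ((n:ℝ)+2) * (1/((n:ℝ)+3)) := by
    rw [mul_one_div, mul_one_div, div_le_div_iff₀ (by positivity) (by positivity)]
    nlinarith
  linarith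

set_option maxHeartbeats 1600000 in
theorem stmt_6 (ρ : ℝ) (hρ : 1 ≤ ρ) :
    ClassM (fun n : ℕ => ((n : ℝ) + 1) ^ (ρ * n)) := by
  refine ⟨?_, ?_, ?_, ?_, ?_, ?_, ?_⟩
  · intro n
    exact Real.rpow_pos_of_pos (by positivity) _
  ·
    intro a b hab
    simp only
    have hρ0 : (0:ℝ) ≤ ρ := by linarith
    have hab' : ((a:ℝ)) ≤ (b:ℝ) := Nat.cast_le.mpr hab
    have h1 : ((a:ℝ)+1) ^ (ρ * a) ≤ ((b:ℝ)+1) ^ (ρ * a) :=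
      Real.rpow_le_rpow (by positivity) (by linarith) (by positivity)
    have h2 : ((b:ℝ)+1) ^ (ρ * a) ≤ ((b:ℝ)+1) ^ (ρ * b) :=
      Real.rpow_le_rpow_of_exponent_le (by linarith [Nat.cast_nonneg (α := ℝ) b])
        (mul_le_mul_of_nonneg_left hab' hρ0)
    exact h1.trans h2
  · simp
  ·
    intro n
    simp only
    have h1 : (0:ℝ) < (n:ℝ)+1 := by positivity
    have h2 : (0:ℝ) < (n:ℝ)+2 := by positivity
    have h3 : (0:ℝ) < (n:ℝ)+3 := by positivity
    have hρ0 : (0:ℝ) ≤ ρ := by linarith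
    push_cast
    rw [show ((n:ℝ)+1+1) = (n:ℝ)+2 by ring, show ((n:ℝ)+2+1) = (n:ℝ)+3 by ring]
    rw [← Real.log_le_log_iff (by positivity) (by positivity), Real.log_pow,
      Real.log_mul (by positivity) (by positivity), Real.log_rpow h2, Real.log_rpow h1,
      Real.log_rpow h3]
    have C := stmt6_convexity n
    have := mul_le_mul_of_nonneg_left C hρ0
    push_cast
    nlinarith [this]
  ·
    refine ⟨1, one_pos, 1, one_pos, fun n => ?_⟩
    simp only [one_mul, one_pow]
    have h1 : (n.factorial : ℝ) ≤ ((n:ℝ)+1) ^ (n:ℕ) := by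
      have := (Nat.factorial_le_pow n).trans (Nat.pow_le_pow_left (Nat.le_succ n) n)
      exact_mod_cast this
    have h2 : ((n:ℝ)+1) ^ (n:ℕ) = ((n:ℝ)+1) ^ ((n:ℕ):ℝ) := (Real.rpow_natCast _ n).symm
    have h3 : ((n:ℝ)+1) ^ ((n:ℕ):ℝ) ≤ ((n:ℝ)+1) ^ (ρ * n) := by
      apply Real.rpow_le_rpow_of_exponent_le (by simp)
      nlinarith [Nat.cast_nonneg (α := ℝ) n]
    calc (n.factorial : ℝ) ≤ ((n:ℝ)+1) ^ (n:ℕ) := h1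
      _ = _ := h2
      _ ≤ _ := h3
  · intro s hs
    simp only
    have hρ0 : (0:ℝ) < ρ := by linarith
    have hs0 : (0:ℝ) < s := by linarith
    have hP : 0 < Real.log s := Real.log_pos hs
    set u := fun n : ℕ => (((⌊s * (n:ℝ)⌋₊ : ℝ) + 1) ^ (ρ * (⌊s * (n:ℝ)⌋₊ : ℕ)) /
        (((n:ℝ) + 1) ^ (ρ * n)) ^ s) ^ ((1:ℝ) / n) with hu_def
    have hu_pos : ∀ n : ℕ, 0 < u n := by
      intro n
      apply Real.rpow_pos_of_pos
      apply div_pos (Real.rpow_pos_of_pos (by positivity) _)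
      exact Real.rpow_pos_of_pos (Real.rpow_pos_of_pos (by positivity) _) _
    -- log of u n
    have hlog_u : ∀ n : ℕ, Real.log (u n) =
        (1/(n:ℝ)) * (ρ * (⌊s * (n:ℝ)⌋₊ : ℝ) * Real.log ((⌊s * (n:ℝ)⌋₊ : ℝ) + 1)
          - ρ * (n:ℝ) * s * Real.log ((n:ℝ) + 1)) := by
      intro n
      set m := ⌊s * (n:ℝ)⌋₊
      have hA : (0:ℝ) < ((m:ℝ) + 1) ^ (ρ * m) := Real.rpow_pos_of_pos (by positivity) _
      have hB : (0:ℝ) < (((n:ℝ) + 1) ^ (ρ * n)) ^ s :=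
        Real.rpow_pos_of_pos (Real.rpow_pos_of_pos (by positivity) _) _
      rw [hu_def]
      simp only
      rw [Real.log_rpow (div_pos hA hB), Real.log_div (ne_of_gt hA) (ne_of_gt hB),
        Real.log_rpow (by positivity), Real.log_rpow (Real.rpow_pos_of_pos (by positivity) _),
        Real.log_rpow (by positivity)]
      ring
    -- upper bound
    have hub : ∀ n : ℕ, 1 ≤ n → u n ≤ s ^ (ρ * s) := by
      intro n hn
      have hn0 : (0:ℝ) < n := by exact_mod_cast hn
      rw [← Real.log_le_log_iff (hu_pos n) (Real.rpow_pos_of_pos hs0 _), hlog_u n,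
        Real.log_rpow hs0]
      set m := ⌊s * (n:ℝ)⌋₊ with hm_def
      have hm_le : (m:ℝ) ≤ s * n := Nat.floor_le (by positivity)
      have hm1 : (m:ℝ) + 1 ≤ s * ((n:ℝ) + 1) := by nlinarith
      have t1 : (m:ℝ) * Real.log ((m:ℝ)+1) ≤ (s * n) * Real.log (s * ((n:ℝ)+1)) := by
        apply mul_le_mul hm_le (Real.log_le_log (by positivity) hm1)
          (Real.log_nonneg (by linarith [Nat.cast_nonneg (α := ℝ) m])) (by positivity)
      have t2 := mul_le_mul_of_nonneg_left t1 hρ0.le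
      rw [Real.log_mul (ne_of_gt hs0) (by positivity)] at t2
      have e : (1/(n:ℝ)) * (ρ * (m:ℝ) * Real.log ((m:ℝ)+1) - ρ * (n:ℝ) * s * Real.log ((n:ℝ)+1))
          = (ρ * (m:ℝ) * Real.log ((m:ℝ)+1) - ρ * (n:ℝ) * s * Real.log ((n:ℝ)+1)) / (n:ℝ) := by
        ring
      rw [e, div_le_iff₀ hn0]
      linarith [t2]
    -- the liminf lower bound constant
    set c := Real.exp (ρ * (s * Real.log s) / 2) with hc_def
    have hc1 : 1 < c := Real.one_lt_exp_iff.mpr (by positivity)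
    -- choice of a and N
    set a := Real.log s / (4 * s) with ha_def
    have ha : 0 < a := by positivity
    obtain ⟨N, hN⟩ := exists_nat_gt (4 * (s - 1 - Real.log a) / Real.log s + 1)
    -- lower bound eventually
    have hlb : ∀ n : ℕ, max N 1 ≤ n → c ≤ u n := by
      intro n hn
      have hn1 : 1 ≤ n := le_trans (le_max_right N 1) hn
      have hnN : (N:ℝ) ≤ n := Nat.cast_le.mpr (le_trans (le_max_left N 1) hn)
      have hn0 : (0:ℝ) < n := by exact_mod_cast hn1
      have hn1' : (1:ℝ) ≤ n := by exact_mod_cast hn1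
      rw [← Real.log_le_log_iff (Real.exp_pos _) (hu_pos n), hlog_u n, Real.log_exp]
      set m := ⌊s * (n:ℝ)⌋₊ with hm_def
      have hsn1 : 1 ≤ s * (n:ℝ) := by nlinarith
      have hm_lb : s * (n:ℝ) - 1 < (m:ℝ) := by
        have := Nat.lt_floor_add_one (s * (n:ℝ)); linarith
      have hm1 : s * (n:ℝ) ≤ (m:ℝ) + 1 := by linarith
      have hm0 : (0:ℝ) ≤ m := Nat.cast_nonneg m
      set P := Real.log s with hP_def
      set Q := Real.log (n:ℝ) with hQ_def
      set R := Real.log a with hR_def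
      have t2 : Real.log (s * (n:ℝ)) = P + Q := Real.log_mul (ne_of_gt hs0) (ne_of_gt hn0)
      have hQ0 : 0 ≤ Q := Real.log_nonneg hn1'
      -- K : the core inequality
      have K : (n:ℝ) * (s * P) / 2 ≤ (m:ℝ) * Real.log ((m:ℝ)+1) - (n:ℝ) * s * Real.log ((n:ℝ)+1) := by
        have t1 : (s * (n:ℝ) - 1) * Real.log (s * (n:ℝ)) ≤ (m:ℝ) * Real.log ((m:ℝ)+1) := by
          apply mul_le_mul hm_lb.le (Real.log_le_log (by positivity) (by linarith))
            (Real.log_nonneg hsn1) hm0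
        rw [t2] at t1
        have t3 : Real.log ((n:ℝ)+1) ≤ Q + 1/(n:ℝ) := by
          have h := Real.log_le_sub_one_of_pos (show (0:ℝ) < ((n:ℝ)+1)/(n:ℝ) by positivity)
          rw [Real.log_div (by positivity) (ne_of_gt hn0)] at h
          have h2 : ((n:ℝ)+1)/(n:ℝ) - 1 = 1/(n:ℝ) := by field_simp; ring
          rw [← hQ_def] at h
          linarith
        have t3b : s * (n:ℝ) * Real.log ((n:ℝ)+1) ≤ s * (n:ℝ) * Q + s := by
          have h := mul_le_mul_of_nonneg_left t3 (show (0:ℝ) ≤ s * (n:ℝ) by positivity)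
          have h2 : s * (n:ℝ) * (Q + 1/(n:ℝ)) = s * (n:ℝ) * Q + s := by
            field_simp
          linarith
        have t4 : P + Q ≤ (n:ℝ) * P / 4 - 1 - R := by
          have h := stmt6_log_ub (show (0:ℝ) < s * (n:ℝ) by positivity) ha
          rw [t2] at h
          have h2 : a * (s * (n:ℝ)) = (n:ℝ) * P / 4 := by
            rw [ha_def, hP_def]; field_simp
          rw [h2] at h
          exact h
        have t5 : s - 1 - R < (n:ℝ) * P / 4 := by
          have h : 4 * (s - 1 - R) / P < (n:ℝ) := by
            rw [hR_def]; linarith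
          rw [div_lt_iff₀ hP] at h
          linarith
        have t6 : (n:ℝ) * P ≤ s * ((n:ℝ) * P) :=
          le_mul_of_one_le_left (by positivity) hs.le
        linarith [t1, t3b, t4, t5, t6]
      have step := mul_le_mul_of_nonneg_left K hρ0.le
      have e : (1/(n:ℝ)) * (ρ * (m:ℝ) * Real.log ((m:ℝ)+1) - ρ * (n:ℝ) * s * Real.log ((n:ℝ)+1))
          = (ρ * (m:ℝ) * Real.log ((m:ℝ)+1) - ρ * (n:ℝ) * s * Real.log ((n:ℝ)+1)) / (n:ℝ) := by
        ring
      rw [e, le_div_iff₀ hn0]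
      linarith [step]
    -- assemble
    have hbdd : IsBoundedUnder (· ≤ ·) atTop u :=
      ⟨s ^ (ρ * s), by
        rw [eventually_map]
        filter_upwards [eventually_ge_atTop 1] with n hn using hub n hn⟩
    refine lt_of_lt_of_le hc1 (Filter.le_liminf_of_le hbdd.isCoboundedUnder_ge ?_)
    filter_upwards [eventually_ge_atTop (max N 1)] with n hn using hlb n hn
  ·
    intro δ hδ
    have hρ0 : (0:ℝ) < ρ := by linarith
    have h1δ : (1:ℝ) < 1 + δ := by linarith
    set b := Real.log (1 + δ) / ρ with hb_def
    have hb : 0 < b := div_pos (Real.log_pos h1δ) hρ0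
    have hbd : ρ * b = Real.log (1 + δ) := by
      rw [hb_def]; field_simp
    set T := ρ * (1 + b + |Real.log b|) with hT_def
    have hT : 0 < T := by positivity
    refine ⟨1 + δ, by linarith, Real.exp T, Real.one_lt_exp_iff.mpr hT, ?_⟩
    intro n m
    simp only
    have hLm : (0:ℝ) < ((m:ℝ) + 1) ^ (ρ * m) := Real.rpow_pos_of_pos (by positivity) _
    have hLn : (0:ℝ) < ((n:ℝ) + 1) ^ (ρ * n) := Real.rpow_pos_of_pos (by positivity) _
    rw [div_le_iff₀ (by positivity)]
    have hcast : ((m + n : ℕ) : ℝ) = (m:ℝ) + (n:ℝ) := by push_cast; ring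
    rw [show (((m + n : ℕ) : ℝ) + 1) ^ (ρ * (m + n : ℕ)) =
        (((m:ℝ) + (n:ℝ)) + 1) ^ (ρ * ((m:ℝ) + (n:ℝ))) by rw [hcast]]
    rw [← Real.log_le_log_iff (Real.rpow_pos_of_pos (by positivity) _) (by positivity)]
    rw [Real.log_rpow (by positivity)]
    have eR : Real.log ((1 + δ) * Real.exp T ^ n * ((n:ℝ) + 1) ^ (ρ * n) *
        (((m:ℝ) + 1) ^ (ρ * m) * (1 + δ) ^ m)) =
        ρ * b + (n:ℝ) * T + ρ * (n:ℝ) * Real.log ((n:ℝ) + 1) +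
          (ρ * (m:ℝ) * Real.log ((m:ℝ) + 1) + (m:ℝ) * (ρ * b)) := by
      rw [Real.log_mul (by positivity) (by positivity), Real.log_mul (by positivity) (by positivity),
        Real.log_mul (by positivity) (by positivity), Real.log_mul (by positivity) (by positivity),
        Real.log_rpow (by positivity), Real.log_rpow (by positivity), Real.log_pow, Real.log_pow,
        Real.log_exp, hbd]
      try ring
    rw [eR]
    -- core inequality G
    have gA : (m:ℝ) * Real.log ((m:ℝ) + (n:ℝ) + 1) ≤ (m:ℝ) * Real.log ((m:ℝ) + 1) + (n:ℝ) := by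
      have l1 : Real.log ((m:ℝ) + (n:ℝ) + 1) - Real.log ((m:ℝ) + 1) ≤ (n:ℝ) / ((m:ℝ) + 1) := by
        have h := Real.log_le_sub_one_of_pos
          (show (0:ℝ) < ((m:ℝ) + (n:ℝ) + 1) / ((m:ℝ) + 1) by positivity)
        rw [Real.log_div (by positivity) (by positivity)] at h
        have h2 : ((m:ℝ) + (n:ℝ) + 1) / ((m:ℝ) + 1) - 1 = (n:ℝ) / ((m:ℝ) + 1) := by
          field_simp; ring
        linarith
      have l2 : ((m:ℝ)) * ((n:ℝ) / ((m:ℝ) + 1)) ≤ (n:ℝ) := by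
        rw [mul_div_assoc'] at *
        rw [div_le_iff₀ (by positivity)]
        nlinarith [Nat.cast_nonneg (α := ℝ) n, Nat.cast_nonneg (α := ℝ) m]
      have l3 := mul_le_mul_of_nonneg_left l1 (Nat.cast_nonneg (α := ℝ) m)
      nlinarith [l3, l2]
    have gB : (n:ℝ) * Real.log ((m:ℝ) + (n:ℝ) + 1) ≤
        (n:ℝ) * Real.log ((n:ℝ) + 1) + b * (m:ℝ) + (n:ℝ) * (b + |Real.log b|) + b := by
      rcases Nat.eq_zero_or_pos n with hn | hn
      · subst hn
        have hm0' : (0:ℝ) ≤ b * (m:ℝ) := by positivity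
        push_cast
        nlinarith [hm0', hb.le]
      · have hn0 : (0:ℝ) < n := by exact_mod_cast hn
        have ha' : (0:ℝ) < b * (((n:ℝ) + 1) / (n:ℝ)) := by positivity
        have hX : (0:ℝ) < ((m:ℝ) + (n:ℝ) + 1) / ((n:ℝ) + 1) := by positivity
        have h1 := stmt6_log_ub hX ha'
        have h2 := mul_le_mul_of_nonneg_left h1 (Nat.cast_nonneg (α := ℝ) n)
        have h3 : (n:ℝ) * ((b * (((n:ℝ) + 1) / (n:ℝ))) * (((m:ℝ) + (n:ℝ) + 1) / ((n:ℝ) + 1)))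
            = b * ((m:ℝ) + (n:ℝ) + 1) := by
          field_simp
        have h4 : Real.log (b * (((n:ℝ) + 1) / (n:ℝ)))
            = Real.log b + Real.log (((n:ℝ) + 1) / (n:ℝ)) :=
          Real.log_mul (ne_of_gt hb) (by positivity)
        have h4b : (n:ℝ) * Real.log (b * (((n:ℝ) + 1) / (n:ℝ)))
            = (n:ℝ) * Real.log b + (n:ℝ) * Real.log (((n:ℝ) + 1) / (n:ℝ)) := by
          rw [h4]; ring
        have h5 : Real.log (((m:ℝ) + (n:ℝ) + 1) / ((n:ℝ) + 1))
            = Real.log ((m:ℝ) + (n:ℝ) + 1) - Real.log ((n:ℝ) + 1) :=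
          Real.log_div (by positivity) (by positivity)
        have h5b : (n:ℝ) * Real.log (((m:ℝ) + (n:ℝ) + 1) / ((n:ℝ) + 1))
            = (n:ℝ) * Real.log ((m:ℝ) + (n:ℝ) + 1) - (n:ℝ) * Real.log ((n:ℝ) + 1) := by
          rw [h5]; ring
        have h6 : -((n:ℝ) * Real.log b) ≤ (n:ℝ) * |Real.log b| := by
          have := mul_le_mul_of_nonneg_left (neg_le_abs (Real.log b)) (Nat.cast_nonneg (α := ℝ) n)
          linarith
        have h7 : 0 ≤ (n:ℝ) * Real.log (((n:ℝ) + 1) / (n:ℝ)) := by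
          apply mul_nonneg (Nat.cast_nonneg (α := ℝ) n)
          apply Real.log_nonneg
          rw [le_div_iff₀ hn0]; linarith
        have hm0 : (0:ℝ) ≤ m := Nat.cast_nonneg m
        linarith [h2, h3, h4b, h5b, h6, h7]
    have G := mul_le_mul_of_nonneg_left (add_le_add gA gB) hρ0.le
    have hTn : (n:ℝ) * T = ρ * (n:ℝ) + ρ * (n:ℝ) * b + ρ * (n:ℝ) * |Real.log b| := by
      rw [hT_def]; ring
    linarith [G, hTn]
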